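/- Let h > 0, ξ_n = a + n·h, φ_n(x) = B_1((x - ξ_{n-1})/h). Then for any integers n, m and real shift s, ∫_ℝ φ_n(x+s) φ_m(x) dx = h · B_3(m - n + 2 + s/h) = h · B_3(n - m + 2 - s/h). -/

import Mathlib

open MeasureTheory Real

set_option maxHeartbeats 1000000

noncomputable def B : ℕ → ℝ → ℝ
  | 0, t => if t ∈ Set.Ico (0:ℝ) 1 then 1 else 0
  | p + 1, t => ∫ s in (0:ℝ)..1, B p (t - s)

/-- The hat function centered at ξ_n = a + n h. -/
noncomputable def phi (a h : ℝ) (n : ℤ) (x : ℝ) : ℝ :=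
  B 1 ((x - (a + ((n : ℝ) - 1) * h)) / h)

lemma B_zero (t : ℝ) : B 0 t = Set.indicator (Set.Ico (0:ℝ) 1) (fun _ => (1:ℝ)) t := by
  simp [B, Set.indicator]

lemma B_succ (p : ℕ) (t : ℝ) : B (p+1) t = ∫ s in (0:ℝ)..1, B p (t - s) := rfl

lemma B_succ' (p : ℕ) (t : ℝ) : B (p+1) t = ∫ s in Set.Ioc (0:ℝ) 1, B p (t - s) := by
  rw [B_succ, intervalIntegral.integral_of_le zero_le_one]

lemma B_measurable (p : ℕ) : Measurable (B p) := by
  induction p with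
  | zero =>
      have : B 0 = Set.indicator (Set.Ico (0:ℝ) 1) (fun _ => (1:ℝ)) := funext B_zero
      rw [this]
      exact (measurable_const.indicator measurableSet_Ico)
  | succ p ih =>
      have h : StronglyMeasurable (Function.uncurry fun t s => B p (t - s)) :=
        ((ih.comp (measurable_fst.sub measurable_snd)).stronglyMeasurable)
      have := h.integral_prod_right (ν := volume.restrict (Set.Ioc (0:ℝ) 1))
      have heq : (fun t => ∫ s in Set.Ioc (0:ℝ) 1, B p (t - s)) = B (p+1) := by
        funext t; rw [B_succ']
      rw [heq] at this
      exact this.measurable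

lemma B_nonneg (p : ℕ) (t : ℝ) : 0 ≤ B p t := by
  induction p generalizing t with
  | zero => rw [B_zero]; exact Set.indicator_nonneg (fun _ _ => zero_le_one) _
  | succ p ih =>
      rw [B_succ]
      exact intervalIntegral.integral_nonneg zero_le_one (fun s _ => ih _)

lemma B_le_one (p : ℕ) (t : ℝ) : B p t ≤ 1 := by
  induction p generalizing t with
  | zero => rw [B_zero]; exact Set.indicator_le_self' (fun _ _ => zero_le_one) t
  | succ p ih =>
      have hint : IntegrableOn (fun s => B p (t - s)) (Set.Ioc (0:ℝ) 1) := by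
        refine Integrable.mono' (g := fun _ => (1:ℝ)) ((integrableOn_const_iff).mpr (Or.inr ?_))
          ((B_measurable p).comp (measurable_const.sub measurable_id)).aestronglyMeasurable
          (Filter.Eventually.of_forall fun s => ?_)
        · simp
        · rw [Real.norm_eq_abs, abs_of_nonneg (B_nonneg _ _)]; exact ih _
      rw [B_succ']
      calc ∫ s in Set.Ioc (0:ℝ) 1, B p (t - s)
          ≤ ∫ _s in Set.Ioc (0:ℝ) 1, (1:ℝ) :=
            setIntegral_mono_on hint ((integrableOn_const_iff).mpr (Or.inr (by simp)))
              measurableSet_Ioc (fun s _ => ih _)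
        _ = 1 := by simp

lemma B_integrableOn_Ioc (p : ℕ) (t : ℝ) :
    IntegrableOn (fun s => B p (t - s)) (Set.Ioc (0:ℝ) 1) := by
  refine Integrable.mono' (g := fun _ => (1:ℝ)) ((integrableOn_const_iff).mpr (Or.inr (by simp)))
    ((B_measurable p).comp (measurable_const.sub measurable_id)).aestronglyMeasurable
    (Filter.Eventually.of_forall fun s => ?_)
  rw [Real.norm_eq_abs, abs_of_nonneg (B_nonneg _ _)]; exact B_le_one _ _

lemma B_support (p : ℕ) (t : ℝ) (ht : t < 0 ∨ (p:ℝ) + 1 < t) : B p t = 0 := by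
  induction p generalizing t with
  | zero =>
      rw [B_zero, Set.indicator_apply_eq_zero]
      intro h
      rcases ht with h1 | h1
      · exact absurd h.1 (not_le.mpr h1)
      · exact absurd h.2 (not_lt.mpr (by push_cast at h1 ⊢; linarith))
  | succ p ih =>
      rw [B_succ']
      refine setIntegral_eq_zero_of_forall_eq_zero (fun s hs => ?_)
      refine ih _ ?_
      rcases ht with h1 | h1
      · exact Or.inl (by cases hs with | intro h2 h3 => linarith)
      · refine Or.inr ?_
        push_cast at h1 ⊢
        cases hs with | intro h2 h3 => linarith

lemma B_integrable (p : ℕ) : Integrable (B p) := by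
  refine Integrable.mono' (g := Set.indicator (Set.Icc (0:ℝ) ((p:ℝ)+1)) (fun _ => (1:ℝ)))
    ?_ (B_measurable p).aestronglyMeasurable (Filter.Eventually.of_forall fun t => ?_)
  · rw [integrable_indicator_iff measurableSet_Icc]
    exact (integrableOn_const_iff).mpr (Or.inr (by simp [Real.volume_Icc]))
  · rw [Real.norm_eq_abs, abs_of_nonneg (B_nonneg _ _)]
    by_cases ht : t ∈ Set.Icc (0:ℝ) ((p:ℝ)+1)
    · rw [Set.indicator_of_mem ht]; exact B_le_one _ _
    · rw [Set.indicator_of_notMem ht]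
      have := ht
      simp only [Set.mem_Icc, not_and_or, not_le] at this
      exact le_of_eq (B_support p t this)

lemma B_conv (p q : ℕ) (x : ℝ) :
    (∫ u : ℝ, B p (x - u) * B q u) = B (p + q + 1) x := by
  induction q generalizing x with
  | zero =>
      have h1 : ∀ u : ℝ, B p (x - u) * B 0 u
          = Set.indicator (Set.Ico (0:ℝ) 1) (fun u => B p (x - u)) u := by
        intro u
        rw [B_zero, Set.indicator, Set.indicator]
        split_ifs <;> simp
      simp_rw [h1]
      rw [integral_indicator measurableSet_Ico, setIntegral_congr_set Ico_ae_eq_Ioc, ← B_succ']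
  | succ q ih =>
      have h1 : ∀ u : ℝ, B p (x - u) * B (q+1) u
          = ∫ s in Set.Ioc (0:ℝ) 1, B p (x - u) * B q (u - s) := by
        intro u; rw [B_succ', integral_const_mul]
      simp_rw [h1]
      have hInt : Integrable (Function.uncurry fun u s => B p (x - u) * B q (u - s))
          (volume.prod (volume.restrict (Set.Ioc (0:ℝ) 1))) := by
        have hmeas : Measurable (Function.uncurry fun u s => B p (x - u) * B q (u - s)) :=
          ((B_measurable p).comp (measurable_const.sub measurable_fst)).mul
            ((B_measurable q).comp (measurable_fst.sub measurable_snd))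
        rw [integrable_prod_iff hmeas.aestronglyMeasurable]
        simp only [Function.uncurry_apply_pair]
        constructor
        · refine Filter.Eventually.of_forall fun u => ?_
          exact (B_integrableOn_Ioc q u).const_mul _
        · refine Integrable.mono'
            (g := Set.indicator (Set.Icc (x - ((p:ℝ)+1)) x) (fun _ => (1:ℝ))) ?_ ?_
            (Filter.Eventually.of_forall fun u => ?_)
          · rw [integrable_indicator_iff measurableSet_Icc]
            exact (integrableOn_const_iff).mpr (Or.inr (by simp [Real.volume_Icc]))
          · have hmn : StronglyMeasurable
                (Function.uncurry fun u s => ‖B p (x - u) * B q (u - s)‖) := by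
              exact hmeas.norm.stronglyMeasurable
            exact (hmn.integral_prod_right).aestronglyMeasurable
          · have hnn : 0 ≤ ∫ s in Set.Ioc (0:ℝ) 1, ‖B p (x - u) * B q (u - s)‖ :=
              integral_nonneg fun s => norm_nonneg _
            rw [Real.norm_eq_abs, abs_of_nonneg hnn]
            have hle : (∫ s in Set.Ioc (0:ℝ) 1, ‖B p (x - u) * B q (u - s)‖)
                ≤ ∫ _s in Set.Ioc (0:ℝ) 1, B p (x - u) := by
              refine setIntegral_mono_on
                (((B_integrableOn_Ioc q u).const_mul _).norm)
                ((integrableOn_const_iff).mpr (Or.inr (by simp))) measurableSet_Ioc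
                (fun s _ => ?_)
              rw [Real.norm_eq_abs, abs_of_nonneg (mul_nonneg (B_nonneg _ _) (B_nonneg _ _))]
              calc B p (x - u) * B q (u - s) ≤ B p (x - u) * 1 := by
                    exact mul_le_mul_of_nonneg_left (B_le_one _ _) (B_nonneg _ _)
                _ = B p (x - u) := mul_one _
            refine hle.trans ?_
            rw [setIntegral_const]
            simp only [Real.volume_real_Ioc_of_le zero_le_one, sub_zero, one_smul]
            by_cases hu : u ∈ Set.Icc (x - ((p:ℝ)+1)) x
            · rw [Set.indicator_of_mem hu]; exact B_le_one _ _
            · rw [Set.indicator_of_notMem hu]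
              simp only [Set.mem_Icc, not_and_or, not_le] at hu
              refine le_of_eq (B_support p _ ?_)
              rcases hu with hu | hu
              · exact Or.inr (by linarith)
              · exact Or.inl (by linarith)
      rw [integral_integral_swap (f := fun u s => B p (x - u) * B q (u - s)) hInt]
      have h2 : ∀ s : ℝ, (∫ u : ℝ, B p (x - u) * B q (u - s)) = B (p + q + 1) (x - s) := by
        intro s
        rw [← integral_add_right_eq_self (fun u => B p (x - u) * B q (u - s)) s]
        simp only [add_sub_cancel_right]
        have : ∀ u : ℝ, B p (x - (u + s)) = B p ((x - s) - u) := fun u => by ring_nf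
        simp_rw [this]
        exact ih (x - s)
      simp_rw [h2]
      rw [← B_succ']
      have hpq : p + q + 1 + 1 = p + (q + 1) + 1 := by omega
      rw [hpq]

lemma B0_symm {u : ℝ} (h0 : u ≠ 0) (h1 : u ≠ 1) : B 0 (1 - u) = B 0 u := by
  simp only [B, Set.mem_Ico]
  split_ifs with ha hb hb
  · rfl
  · exact absurd ⟨by linarith [ha.2], lt_of_le_of_ne (by linarith [ha.1]) h1⟩ hb
  · exact absurd ⟨by linarith [hb.2], by
      have := lt_of_le_of_ne hb.1 (Ne.symm h0); linarith⟩ ha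
  · rfl

lemma B_symm (p : ℕ) (t : ℝ) : B (p + 1) t = B (p + 1) ((p : ℝ) + 2 - t) := by
  induction p generalizing t with
  | zero =>
      have key : B 1 ((2:ℝ) - t) = ∫ s in (0:ℝ)..1, B 0 ((1 - t) + s) := by
        rw [B_succ]
        have : ∀ s : ℝ, B 0 ((2:ℝ) - t - s) = (fun u => B 0 ((1 - t) + u)) (1 - s) := by
          intro s; simp only []; ring_nf
        simp_rw [this]
        rw [intervalIntegral.integral_comp_sub_left (fun u => B 0 ((1 - t) + u)) 1]
        norm_num
      have hc : ((0:ℕ) : ℝ) + 2 - t = (2:ℝ) - t := by norm_num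
      rw [hc, key, B_succ]
      refine (intervalIntegral.integral_congr_ae ?_).symm
      have hnull : ∀ᵐ s : ℝ, s ≠ t ∧ s ≠ t - 1 := by
        have : volume ({t, t - 1} : Set ℝ) = 0 :=
          ((Set.finite_singleton (t-1)).insert t).measure_zero _
        have h2 := (measure_mono_null (fun s hs => ?_) this : volume {s : ℝ | ¬(s ≠ t ∧ s ≠ t - 1)} = 0)
        · exact (ae_iff).mpr h2
        · simp only [Set.mem_setOf_eq, not_and_or, not_not] at hs
          rcases hs with h | h <;> simp [h]
      filter_upwards [hnull] with s hs _
      have : (1 - t) + s = 1 - (t - s) := by ring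
      rw [this, B0_symm (sub_ne_zero.mpr (Ne.symm hs.1)) (by intro h; exact hs.2 (by linarith))]
  | succ p ih =>
      rw [B_succ (p+1), B_succ (p+1)]
      have h1 : ∀ s : ℝ, B (p+1) ((((p+1 : ℕ)):ℝ) + 2 - t - s)
          = (fun u => B (p+1) (((p:ℝ) + 2 - t) + u)) (1 - s) := by
        intro s; push_cast; ring_nf
      simp_rw [h1]
      have h2 := intervalIntegral.integral_comp_sub_left (E := ℝ) (a := 0) (b := 1)
        (fun u => B (p+1) (((p:ℝ) + 2 - t) + u)) 1
      norm_num at h2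
      rw [h2]
      have h4 := intervalIntegral.integral_comp_add_right (a := (0:ℝ)) (b := 1)
        (fun x => B (p+1) x) ((p:ℝ) + 2 - t)
      simp only [zero_add] at h4
      have hb : (1:ℝ) + ((p:ℝ) + 2 - t) = ((p:ℝ) + 2 - t) + 1 := by ring
      rw [hb] at h4
      rw [← h4]
      refine intervalIntegral.integral_congr (fun s _ => ?_)
      have he : s + ((p:ℝ) + 2 - t) = (p:ℝ) + 2 - (t - s) := by ring
      rw [he, ← ih (t - s)]

lemma B3_symm (t : ℝ) : B 3 (2 + t) = B 3 (2 - t) := by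
  have := B_symm 2 (2 + t)
  norm_num at this
  convert this using 2
  ring

theorem hat_shifted_overlap (a h s : ℝ) (hh : 0 < h) (n m : ℤ) :
    (∫ x : ℝ, phi a h n (x + s) * phi a h m x)
      = h * B 3 ((m : ℝ) - (n : ℝ) + 2 + s / h) ∧
    (∫ x : ℝ, phi a h n (x + s) * phi a h m x)
      = h * B 3 ((n : ℝ) - (m : ℝ) + 2 - s / h) := by
  have hne : h ≠ 0 := ne_of_gt hh
  set cm : ℝ := a + ((m : ℝ) - 1) * h with hcm
  set τ : ℝ := ((m : ℝ) - (n : ℝ)) + s / h with hτ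
  -- step 1: translate by cm
  have step1 : (∫ x : ℝ, phi a h n (x + s) * phi a h m x)
      = ∫ x : ℝ, phi a h n (x + cm + s) * phi a h m (x + cm) := by
    rw [← integral_add_right_eq_self (fun x => phi a h n (x + s) * phi a h m x) cm]
  -- step 2: rescale by h
  have h2 := MeasureTheory.Measure.integral_comp_mul_left
    (fun x => phi a h n (x + cm + s) * phi a h m (x + cm)) h
  have habs : |h⁻¹| = h⁻¹ := abs_of_pos (inv_pos.mpr hh)
  rw [habs, smul_eq_mul] at h2
  have step2 : (∫ x : ℝ, phi a h n (x + cm + s) * phi a h m (x + cm))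
      = h * ∫ x : ℝ, phi a h n (h * x + cm + s) * phi a h m (h * x + cm) := by
    rw [h2, ← mul_assoc, mul_inv_cancel₀ hne, one_mul]
  -- step 3: simplify the integrand
  have step3 : ∀ x : ℝ, phi a h n (h * x + cm + s) * phi a h m (h * x + cm)
      = B 1 ((2 - τ) - x) * B 1 x := by
    intro x
    have e1 : (h * x + cm + s - (a + ((n : ℝ) - 1) * h)) / h = x + τ := by
      rw [hcm, hτ]; field_simp; ring
    have e2 : (h * x + cm - (a + ((m : ℝ) - 1) * h)) / h = x := by
      rw [hcm]; field_simp; ring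
    rw [phi, phi, e1, e2]
    congr 1
    have := B_symm 0 (x + τ)
    norm_num at this
    rw [this]
    congr 1
    ring
  have step4 : (∫ x : ℝ, B 1 ((2 - τ) - x) * B 1 x) = B 3 (2 - τ) := by
    have := B_conv 1 1 (2 - τ)
    norm_num at this
    exact this
  have main : (∫ x : ℝ, phi a h n (x + s) * phi a h m x) = h * B 3 (2 - τ) := by
    rw [step1, step2]
    simp_rw [step3]
    rw [step4]
  constructor
  · rw [main]
    congr 1
    have : (2 : ℝ) - τ = 2 - (((m : ℝ) - (n : ℝ)) + s / h) := by rw [hτ]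
    rw [this, ← B3_symm]
    congr 1
    ring
  · rw [main]
    congr 1
    rw [hτ]
    ring
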